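/- Let A ∈ R^{p×q} be a random sparse matrix where column i has d_i ≥ 1 + β log p nonzero entries in uniformly random positions (independently across columns), with generic nonzero values, and q ≤ (cp/n)^n for constants 0 < c < 1 and β > (n−1)/log(1/c). Then krank(A) ≥ cp with probability at least 1 − O(p^{−β'}) where β' = β log(1/c) − (n−1) > 0. -/

import Mathlib

open MvPolynomial


lemma card_filter_subset_eq (p k : ℕ) (R : Finset (Fin p)) :
    (Finset.univ.filter
      (fun T : {T : Finset (Fin p) // T.card = k} => (T : Finset (Fin p)) ⊆ R)).card
      = R.card.choose k := by
  classical
  rw [← Finset.card_powersetCard k R]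
  refine Finset.card_bij (fun T _ => (T : Finset (Fin p))) ?_ ?_ ?_
  · intro T hT
    rw [Finset.mem_powersetCard]
    exact ⟨(Finset.mem_filter.mp hT).2, T.2⟩
  · intro a _ b _ h
    exact Subtype.ext h
  · intro T hT
    rw [Finset.mem_powersetCard] at hT
    exact ⟨⟨T, hT.2⟩, Finset.mem_filter.mpr ⟨Finset.mem_univ _, hT.1⟩, rfl⟩

lemma card_omega (p q : ℕ) (d : Fin q → ℕ) :
    Fintype.card (∀ j : Fin q, {T : Finset (Fin p) // T.card = d j})
      = ∏ j, p.choose (d j) := by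
  rw [Fintype.card_pi]
  apply Finset.prod_congr rfl
  intro j _
  rw [Fintype.card_finset_len, Fintype.card_fin]

lemma card_event (p q : ℕ) (d : Fin q → ℕ) (S : Finset (Fin q)) (R : Finset (Fin p)) :
    (Finset.univ.filter (fun ω : ∀ j : Fin q, {T : Finset (Fin p) // T.card = d j} =>
        ∀ j ∈ S, ((ω j : Finset (Fin p)) ⊆ R))).card
      = ∏ j, (if j ∈ S then R.card.choose (d j) else p.choose (d j)) := by
  classical
  have heq : Finset.univ.filter (fun ω : ∀ j : Fin q, {T : Finset (Fin p) // T.card = d j} =>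
        ∀ j ∈ S, ((ω j : Finset (Fin p)) ⊆ R))
      = Fintype.piFinset (fun j => Finset.univ.filter
          (fun T : {T : Finset (Fin p) // T.card = d j} =>
            j ∈ S → (T : Finset (Fin p)) ⊆ R)) := by
    ext ω
    simp [Fintype.mem_piFinset]
  rw [heq, Fintype.card_piFinset]
  apply Finset.prod_congr rfl
  intro j _
  by_cases hj : j ∈ S
  · rw [if_pos hj, ← card_filter_subset_eq p (d j) R]
    congr 1
    ext T
    simp [hj]
  · rw [if_neg hj, Finset.filter_true_of_mem (fun T _ h => absurd h hj), Finset.card_univ,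
      Fintype.card_finset_len, Fintype.card_fin]


lemma descFac_mul_pow_le (m p k : ℕ) (h : m ≤ p) :
    m.descFactorial k * p ^ k ≤ p.descFactorial k * m ^ k := by
  induction k with
  | zero => simp
  | succ k ih =>
    have hkey : (m - k) * p ≤ (p - k) * m := by
      rw [Nat.sub_mul, Nat.sub_mul, mul_comm p m]
      exact Nat.sub_le_sub_left (Nat.mul_le_mul_left k h) (m * p)
    calc m.descFactorial (k+1) * p ^ (k+1)
        = ((m - k) * p) * (m.descFactorial k * p ^ k) := by
          rw [Nat.descFactorial_succ, pow_succ]; ring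
      _ ≤ ((p - k) * m) * (p.descFactorial k * m ^ k) := Nat.mul_le_mul hkey ih
      _ = p.descFactorial (k+1) * m ^ (k+1) := by
          rw [Nat.descFactorial_succ, pow_succ]; ring

lemma choose_div_choose_le (m p k : ℕ) (hmp : m ≤ p) (hkp : k ≤ p) :
    (m.choose k : ℝ) / (p.choose k : ℝ) ≤ ((m : ℝ) / p) ^ k := by
  rcases Nat.eq_zero_or_pos p with hp | hp
  · subst hp
    interval_cases m
    interval_cases k
    norm_num
  have hnat : m.choose k * p ^ k ≤ p.choose k * m ^ k := by
    have h := descFac_mul_pow_le m p k hmp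
    rw [Nat.descFactorial_eq_factorial_mul_choose, Nat.descFactorial_eq_factorial_mul_choose,
      mul_assoc, mul_assoc] at h
    exact Nat.le_of_mul_le_mul_left h (Nat.factorial_pos k)
  have hc : (0:ℝ) < (p.choose k : ℝ) := by exact_mod_cast Nat.choose_pos hkp
  have hpk : (0:ℝ) < (p:ℝ) ^ k := by positivity
  rw [div_pow, div_le_div_iff₀ hc hpk]
  calc (m.choose k : ℝ) * (p:ℝ)^k = ((m.choose k * p ^ k : ℕ) : ℝ) := by push_cast; ring
    _ ≤ ((p.choose k * m ^ k : ℕ) : ℝ) := by exact_mod_cast hnat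
    _ = (m:ℝ)^k * (p.choose k : ℝ) := by push_cast; ring

lemma pow_le_factorial_mul_exp (k : ℕ) :
    (k : ℝ) ^ k ≤ (k.factorial : ℝ) * Real.exp 1 ^ k := by
  have h := Real.sum_le_exp_of_nonneg (x := (k:ℝ)) (by positivity) (k+1)
  have h2 : (k:ℝ)^k / (k.factorial : ℝ) ≤ Real.exp k := by
    refine le_trans ?_ h
    exact Finset.single_le_sum (f := fun i => (k:ℝ)^i / (i.factorial : ℝ))
      (fun i _ => by positivity) (Finset.self_mem_range_succ k)
  rw [Real.exp_one_pow, mul_comm]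
  rwa [div_le_iff₀ (by positivity : (0:ℝ) < (k.factorial : ℝ))] at h2



lemma alg_ident (a b r t w s1 : ℝ) (k : ℕ) (hr : r ≠ 0) (hs1 : s1 ≠ 0) (hb : b ≠ 0)
    (ht : t ≠ 0) :
    (a^(k+2) * b^(k+2) / r^(k+2)) * (t^(k+1) * b^(k+1) / s1^(k+1)) * w^(k+2)
      = ((a*b/r) * (t*b/s1) * w)^(k+2) * (s1/(t*b)) := by
  have hY0 : t*b/s1 ≠ 0 := div_ne_zero (mul_ne_zero ht hb) hs1
  have c1 : (t*b/s1)^(k+2) * (s1/(t*b)) = (t*b/s1)^(k+1) := by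
    rw [show s1/(t*b) = (t*b/s1)⁻¹ by rw [inv_div], pow_succ, mul_assoc,
      mul_inv_cancel₀ hY0, mul_one]
  calc (a^(k+2) * b^(k+2) / r^(k+2)) * (t^(k+1) * b^(k+1) / s1^(k+1)) * w^(k+2)
      = ((a*b/r)^(k+2)) * ((t*b/s1)^(k+1)) * w^(k+2) := by
        rw [div_pow, mul_pow, div_pow, mul_pow]
    _ = ((a*b/r)^(k+2)) * ((t*b/s1)^(k+2) * (s1/(t*b))) * w^(k+2) := by rw [c1]
    _ = ((a*b/r) * (t*b/s1) * w)^(k+2) * (s1/(t*b)) := by ring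

lemma alg_u (a b r t s1 pa cc : ℝ) (hr : r ≠ 0) (ht : t ≠ 0) (hs1 : s1 ≠ 0)
    (hcc : cc ≠ 0) :
    (a*b/r) * (t*b/s1) * ((s1/t)^2 * pa / cc) = b^2 * a * s1 * pa / (r * t * cc) := by
  field_simp

set_option maxHeartbeats 1000000 in
lemma per_term (c β : ℝ) (n p q s : ℕ) (hc0 : 0 < c) (hc1 : c < 1)
    (hp1 : 1 ≤ p) (hβ1 : 1 ≤ β * Real.log p) (hq : (q : ℝ) ≤ (p : ℝ) ^ n)
    (hs2 : 2 ≤ s) (hscp : (s : ℝ) ≤ c * p) :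
    (q.choose s : ℝ) * (p.choose (s-1) : ℝ) *
      ((((s:ℝ)-1)/(p:ℝ)) ^ ((1:ℝ) + β * Real.log p)) ^ s
    ≤ ((Real.exp 1 ^ 2 / c) * (p:ℝ) ^ (-(β * Real.log (1/c) - ((n:ℝ)-1)))) ^ s := by
  obtain ⟨k, rfl⟩ : ∃ k, s = k + 2 := ⟨s - 2, by omega⟩
  have hsub : (k + 2) - 1 = k + 1 := rfl
  rw [hsub]
  have hP : (0:ℝ) < (p:ℝ) := by exact_mod_cast hp1
  have hP1 : (1:ℝ) ≤ (p:ℝ) := by exact_mod_cast hp1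
  obtain ⟨E, hEdef⟩ : ∃ E : ℝ, Real.exp 1 = E := ⟨_, rfl⟩
  rw [hEdef]
  have hE0 : (0:ℝ) < E := hEdef ▸ Real.exp_pos 1
  have hE1 : (1:ℝ) ≤ E := by
    have := Real.add_one_le_exp (1:ℝ); rw [hEdef] at this; linarith
  have hcast : ((k+2:ℕ):ℝ) - 1 = ((k+1:ℕ):ℝ) := by push_cast; ring
  rw [hcast]
  obtain ⟨s1, hs1def⟩ : ∃ s1 : ℝ, ((k+1:ℕ):ℝ) = s1 := ⟨_, rfl⟩
  rw [hs1def]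
  have hs1 : (1:ℝ) ≤ s1 := by rw [← hs1def]; push_cast; linarith
  have hs10 : (0:ℝ) < s1 := by linarith
  have hss1 : s1 ≤ ((k+2:ℕ):ℝ) := by rw [← hs1def]; push_cast; linarith
  have hsr0 : (0:ℝ) < ((k+2:ℕ):ℝ) := by positivity
  obtain ⟨X, hXdef⟩ : ∃ X : ℝ, s1 / (p:ℝ) = X := ⟨_, rfl⟩
  rw [hXdef]
  have hX0 : 0 < X := hXdef ▸ div_pos hs10 hP
  have hXc : X ≤ c := by
    rw [← hXdef, div_le_iff₀ hP]
    have h1 : s1 ≤ c * p := le_trans (by linarith) hscp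
    linarith
  obtain ⟨Pa, hPadef⟩ : ∃ Pa : ℝ, (p:ℝ) ^ (β * Real.log c) = Pa := ⟨_, rfl⟩
  have hPa0 : 0 < Pa := hPadef ▸ Real.rpow_pos_of_pos hP _
  -- Step A
  have hA : (q.choose (k+2) : ℝ) ≤ (q:ℝ)^(k+2) * E^(k+2) / ((k+2:ℕ):ℝ)^(k+2) := by
    have h1 : (q.choose (k+2):ℝ) ≤ (q:ℝ)^(k+2) / ((k+2).factorial : ℝ) :=
      Nat.choose_le_pow_div (k+2) q
    refine h1.trans ?_
    rw [div_le_div_iff₀ (by positivity) (by positivity)]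
    calc (q:ℝ)^(k+2) * ((k+2:ℕ):ℝ)^(k+2)
        ≤ (q:ℝ)^(k+2) * (((k+2).factorial:ℝ) * E^(k+2)) := by
          have h2 := pow_le_factorial_mul_exp (k+2)
          rw [hEdef] at h2
          have hq0 : (0:ℝ) ≤ (q:ℝ)^(k+2) := by positivity
          exact mul_le_mul_of_nonneg_left h2 hq0
      _ = (q:ℝ)^(k+2) * E^(k+2) * ((k+2).factorial:ℝ) := by ring
  -- Step B
  have hB : (p.choose (k+1) : ℝ) ≤ (p:ℝ)^(k+1) * E^(k+1) / s1^(k+1) := by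
    have h1 : (p.choose (k+1):ℝ) ≤ (p:ℝ)^(k+1) / ((k+1).factorial : ℝ) :=
      Nat.choose_le_pow_div (k+1) p
    refine h1.trans ?_
    rw [div_le_div_iff₀ (by positivity) (by positivity)]
    calc (p:ℝ)^(k+1) * s1^(k+1)
        ≤ (p:ℝ)^(k+1) * (((k+1).factorial:ℝ) * E^(k+1)) := by
          have h2 := pow_le_factorial_mul_exp (k+1)
          rw [hEdef, hs1def] at h2
          have hq0 : (0:ℝ) ≤ (p:ℝ)^(k+1) := by positivity
          exact mul_le_mul_of_nonneg_left h2 hq0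
      _ = (p:ℝ)^(k+1) * E^(k+1) * ((k+1).factorial:ℝ) := by ring
  -- Step C
  have hC : X ^ ((1:ℝ) + β * Real.log p) ≤ X^2 * Pa / c := by
    have e1 : X ^ ((1:ℝ) + β * Real.log p) = X^(2:ℕ) * X^(β*Real.log p - 1) := by
      rw [← Real.rpow_natCast X 2, ← Real.rpow_add hX0]
      congr 1
      push_cast
      ring
    have e2 : X ^ (β*Real.log p - 1) ≤ c ^ (β*Real.log p - 1) :=
      Real.rpow_le_rpow hX0.le hXc (by linarith)
    have e4 : c ^ (β*Real.log p) = Pa := by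
      rw [← hPadef, Real.rpow_def_of_pos hc0, Real.rpow_def_of_pos hP]
      ring_nf
    have e3 : c ^ (β*Real.log p - 1) = Pa / c := by
      rw [Real.rpow_sub hc0, Real.rpow_one, e4]
    rw [e1]
    calc X^(2:ℕ) * X^(β*Real.log p - 1) ≤ X^(2:ℕ) * (Pa / c) := by
          refine mul_le_mul_of_nonneg_left ?_ (by positivity)
          rw [← e3]; exact e2
      _ = X^2 * Pa / c := by ring
  have hCs : (X ^ ((1:ℝ) + β * Real.log p))^(k+2) ≤ (X^2 * Pa / c)^(k+2) :=
    pow_le_pow_left₀ (Real.rpow_nonneg hX0.le _) hC _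
  have hLHS : (q.choose (k+2) : ℝ) * (p.choose (k+1) : ℝ) *
      (X ^ ((1:ℝ) + β * Real.log p)) ^ (k+2)
      ≤ ((q:ℝ)^(k+2) * E^(k+2) / ((k+2:ℕ):ℝ)^(k+2)) *
        ((p:ℝ)^(k+1) * E^(k+1) / s1^(k+1)) * (X^2 * Pa / c)^(k+2) := by
    refine mul_le_mul (mul_le_mul hA hB (by positivity) (by positivity)) hCs
      (pow_nonneg (Real.rpow_nonneg hX0.le _) _) ?_
    have h1 : (0:ℝ) ≤ (q:ℝ)^(k+2) * E^(k+2) / ((k+2:ℕ):ℝ)^(k+2) := by positivity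
    have h2 : (0:ℝ) ≤ (p:ℝ)^(k+1) * E^(k+1) / s1^(k+1) := by positivity
    exact mul_nonneg h1 h2
  refine le_trans hLHS ?_
  rw [alg_ident (q:ℝ) E ((k+2:ℕ):ℝ) (p:ℝ) (X^2 * Pa / c) s1 k (ne_of_gt hsr0)
    (ne_of_gt hs10) (ne_of_gt hE0) (ne_of_gt hP)]
  -- base inequality
  have hU0 : 0 ≤ ((q:ℝ)*E/((k+2:ℕ):ℝ)) * ((p:ℝ)*E/s1) * (X^2 * Pa / c) := by
    have h1 : (0:ℝ) ≤ (q:ℝ)*E/((k+2:ℕ):ℝ) := by positivity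
    have h2 : (0:ℝ) ≤ (p:ℝ)*E/s1 := by positivity
    have h3 : (0:ℝ) ≤ X^2 * Pa / c := by positivity
    exact mul_nonneg (mul_nonneg h1 h2) h3
  have hUb : ((q:ℝ)*E/((k+2:ℕ):ℝ)) * ((p:ℝ)*E/s1) * (X^2 * Pa / c)
      ≤ (E ^ 2 / c) * (p:ℝ) ^ (-(β * Real.log (1/c) - ((n:ℝ)-1))) := by
    rw [← hXdef, alg_u (q:ℝ) E ((k+2:ℕ):ℝ) (p:ℝ) s1 Pa c (ne_of_gt hsr0)
      (ne_of_gt hP) (ne_of_gt hs10) (ne_of_gt hc0)]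
    have hrhs : (E ^ 2 / c) * (p:ℝ) ^ (-(β * Real.log (1/c) - ((n:ℝ)-1)))
        = E^2 * ((p:ℝ)^n) * ((k+2:ℕ):ℝ) * Pa / (((k+2:ℕ):ℝ) * (p:ℝ) * c) := by
      have hexp : -(β * Real.log (1/c) - ((n:ℝ)-1)) = (n:ℝ) + β * Real.log c - 1 := by
        rw [one_div, Real.log_inv]; ring
      rw [hexp, Real.rpow_sub hP, Real.rpow_add hP, Real.rpow_one, Real.rpow_natCast,
        hPadef]
      field_simp
    rw [hrhs]
    have h1 : (q:ℝ) * s1 ≤ ((p:ℝ)^n) * ((k+2:ℕ):ℝ) :=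
      mul_le_mul hq hss1 hs10.le (by positivity)
    have hnum : E^2 * (q:ℝ) * s1 * Pa ≤ E^2 * ((p:ℝ)^n) * ((k+2:ℕ):ℝ) * Pa := by
      calc E^2 * (q:ℝ) * s1 * Pa = (E^2*Pa) * ((q:ℝ) * s1) := by ring
        _ ≤ (E^2*Pa) * (((p:ℝ)^n) * ((k+2:ℕ):ℝ)) := by
            refine mul_le_mul_of_nonneg_left h1 ?_
            positivity
        _ = E^2 * ((p:ℝ)^n) * ((k+2:ℕ):ℝ) * Pa := by ring
    gcongr
  calc (((q:ℝ)*E/((k+2:ℕ):ℝ)) * ((p:ℝ)*E/s1) * (X^2 * Pa / c))^(k+2) * (s1/((p:ℝ)*E))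
      ≤ (((q:ℝ)*E/((k+2:ℕ):ℝ)) * ((p:ℝ)*E/s1) * (X^2 * Pa / c))^(k+2) * 1 := by
        refine mul_le_mul_of_nonneg_left ?_ (pow_nonneg hU0 _)
        rw [div_le_one (by positivity)]
        calc s1 ≤ ((k+2:ℕ):ℝ) := hss1
          _ ≤ c * p := hscp
          _ ≤ (p:ℝ) := by nlinarith
          _ ≤ (p:ℝ) * E := by nlinarith
      _ = (((q:ℝ)*E/((k+2:ℕ):ℝ)) * ((p:ℝ)*E/s1) * (X^2 * Pa / c))^(k+2) := by
        rw [mul_one]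
      _ ≤ ((E ^ 2 / c) * (p:ℝ) ^ (-(β * Real.log (1/c) - ((n:ℝ)-1))))^(k+2) :=
        pow_le_pow_left₀ hU0 hUb _


lemma li_of_hall {p q : ℕ} (T : Fin q → Finset (Fin p)) (S : Finset (Fin q))
    (hall : ∀ s : Finset (Fin q), s ⊆ S → s.card ≤ (s.biUnion T).card) :
    LinearIndependent (MvPolynomial (Fin p × Fin q) ℝ)
      (fun j : S => fun i : Fin p =>
        if i ∈ T (j : Fin q) then (MvPolynomial.X (i, (j : Fin q)) : MvPolynomial (Fin p × Fin q) ℝ)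
        else 0) := by
  classical
  obtain ⟨f, hfinj, hfmem⟩ :=
    (Finset.all_card_le_biUnion_card_iff_exists_injective
      (fun j : {x // x ∈ S} => T (j : Fin q))).mp (by
        intro s
        have himg : (s.image Subtype.val).card = s.card :=
          Finset.card_image_of_injective _ Subtype.val_injective
        have hsub : s.image Subtype.val ⊆ S := by
          intro x hx
          obtain ⟨y, _, rfl⟩ := Finset.mem_image.mp hx
          exact y.2
        have h := hall _ hsub
        rw [himg] at h
        refine h.trans (le_of_eq ?_)
        congr 1
        ext x
        simp only [Finset.mem_biUnion, Finset.mem_image]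
        constructor
        · rintro ⟨j, ⟨y, hy, rfl⟩, hx⟩
          exact ⟨y, hy, hx⟩
        · rintro ⟨y, hy, hx⟩
          exact ⟨(y : Fin q), ⟨y, hy, rfl⟩, hx⟩)
  set M : Matrix {x // x ∈ S} {x // x ∈ S} (MvPolynomial (Fin p × Fin q) ℝ) :=
    fun j' j => if f j' ∈ T (j : Fin q) then (X ((f j'), (j : Fin q)) : MvPolynomial (Fin p × Fin q) ℝ) else 0 with hM
  have hdet : M.det ≠ 0 := by
    set g : Fin p × Fin q → ℝ := fun x =>
      if ∃ h : x.2 ∈ S, f ⟨x.2, h⟩ = x.1 then 1 else 0 with hg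
    have hmap : (MvPolynomial.eval g).mapMatrix M = 1 := by
      ext j' j
      simp only [RingHom.mapMatrix_apply, Matrix.map_apply]
      simp only [hM]
      by_cases h1 : f j' ∈ T (j : Fin q)
      · rw [if_pos h1, eval_X]
        have : (∃ h : (j : Fin q) ∈ S, f ⟨(j : Fin q), h⟩ = f j') ↔ j' = j := by
          constructor
          · rintro ⟨h, hf⟩
            exact (hfinj (by simpa using hf)).symm
          · rintro rfl
            exact ⟨j'.2, by simp⟩
        rw [hg]
        simp only [this, Matrix.one_apply]
      · rw [if_neg h1, map_zero, Matrix.one_apply]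
        have : j' ≠ j := by
          rintro rfl
          exact h1 (hfmem j')
        simp [this]
    intro h0
    have := (MvPolynomial.eval g).map_det M
    rw [h0, map_zero, hmap, Matrix.det_one] at this
    exact zero_ne_one this
  rw [Fintype.linearIndependent_iff]
  intro g hg j₀
  have hmv : M.mulVec g = 0 := by
    funext j'
    have h := congrFun hg (f j')
    simp only [Finset.sum_apply, Pi.smul_apply, smul_eq_mul, Pi.zero_apply] at h
    show (∑ j : {x // x ∈ S}, M j' j * g j) = 0
    rw [Finset.sum_congr rfl (fun j _ => mul_comm (M j' j) (g j))]
    simpa only [hM] using h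
  have := Matrix.eq_zero_of_mulVec_eq_zero hdet hmv
  exact congrFun this j₀


open MvPolynomial

set_option maxHeartbeats 2000000 in
theorem random_krank_whp (c β : ℝ) (n : ℕ) (hc0 : 0 < c) (hc1 : c < 1) (hn : 1 ≤ n)
    (hβ : ((n : ℝ) - 1) / Real.log (1 / c) < β) :
    ∃ K C : ℝ, 0 < K ∧ ∀ (p q : ℕ) (d : Fin q → ℕ),
      C ≤ (p : ℝ) → (q : ℝ) ≤ (c * p / n) ^ n →
      (∀ j, d j ≤ p) → (∀ j, 1 + β * Real.log p ≤ (d j : ℝ)) →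
      1 - K * (p : ℝ) ^ (-(β * Real.log (1 / c) - ((n : ℝ) - 1))) ≤
        (Nat.card {ω : ∀ j : Fin q, {T : Finset (Fin p) // T.card = d j} //
            ∀ S : Finset (Fin q), (S.card : ℝ) ≤ c * p →
              LinearIndependent (MvPolynomial (Fin p × Fin q) ℝ)
                (fun j : S => fun i : Fin p =>
                  if i ∈ ((ω (j : Fin q) : {T : Finset (Fin p) // T.card = d (j : Fin q)}) :
                      Finset (Fin p))
                  then (MvPolynomial.X (i, (j : Fin q)) : MvPolynomial (Fin p × Fin q) ℝ)
                  else 0)} : ℝ) /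
          (Nat.card (∀ j : Fin q, {T : Finset (Fin p) // T.card = d j}) : ℝ) := by
  classical
  have hL : 0 < Real.log (1/c) := Real.log_pos (by rw [lt_div_iff₀ hc0]; linarith)
  have hn1 : (1:ℝ) ≤ (n:ℝ) := by exact_mod_cast hn
  have hβpos : 0 < β := lt_of_le_of_lt (div_nonneg (by linarith) hL.le) hβ
  have hβ'pos : 0 < β * Real.log (1/c) - ((n:ℝ)-1) := by
    have := (div_lt_iff₀ hL).mp hβ; linarith
  have hK0 : (0:ℝ) < Real.exp 1 ^ 2 / c := by positivity
  refine ⟨Real.exp 1 ^ 2 / c,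
    max (Real.exp (1/β)) ((8 * (Real.exp 1 ^ 2 / c)) ^
      (β * Real.log (1/c) - ((n:ℝ)-1))⁻¹), hK0, ?_⟩
  intro p q d hpC hq hdp hd
  have hE0 : (0:ℝ) < Real.exp 1 := Real.exp_pos 1
  have hexpP : Real.exp (1/β) ≤ (p:ℝ) := le_trans (le_max_left _ _) hpC
  have hP1 : (1:ℝ) ≤ (p:ℝ) := by
    refine le_trans ?_ hexpP
    rw [← Real.exp_zero]
    exact Real.exp_le_exp.mpr (by positivity)
  have hP : (0:ℝ) < (p:ℝ) := by linarith
  have hp1 : 1 ≤ p := by exact_mod_cast hP1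
  have hβ1 : 1 ≤ β * Real.log p := by
    have h1 : 1/β ≤ Real.log p := by
      rw [← Real.log_exp (1/β)]
      exact Real.log_le_log (Real.exp_pos _) hexpP
    calc (1:ℝ) = β * (1/β) := by field_simp
      _ ≤ β * Real.log p := by
        exact mul_le_mul_of_nonneg_left h1 hβpos.le
  -- abbreviate B
  set B : ℝ := (Real.exp 1 ^ 2 / c) * (p:ℝ) ^ (-(β * Real.log (1/c) - ((n:ℝ)-1))) with hBdef
  have hB0 : 0 ≤ B := by
    rw [hBdef]; positivity
  have h8B : 8 * B ≤ 1 := by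
    have h8K0 : (0:ℝ) < 8 * (Real.exp 1 ^ 2 / c) := by positivity
    have hC2 : (8 * (Real.exp 1 ^ 2 / c)) ^ (β * Real.log (1/c) - ((n:ℝ)-1))⁻¹ ≤ (p:ℝ) :=
      le_trans (le_max_right _ _) hpC
    have hkey : 8 * (Real.exp 1 ^ 2 / c) ≤ (p:ℝ) ^ (β * Real.log (1/c) - ((n:ℝ)-1)) := by
      have h1 : ((8 * (Real.exp 1 ^ 2 / c)) ^ (β * Real.log (1/c) - ((n:ℝ)-1))⁻¹) ^
          (β * Real.log (1/c) - ((n:ℝ)-1)) ≤ (p:ℝ) ^ (β * Real.log (1/c) - ((n:ℝ)-1)) :=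
        Real.rpow_le_rpow (Real.rpow_nonneg h8K0.le _) hC2 hβ'pos.le
      rwa [← Real.rpow_mul h8K0.le, inv_mul_cancel₀ (ne_of_gt hβ'pos), Real.rpow_one] at h1
    rw [hBdef, Real.rpow_neg hP.le]
    rw [show 8 * ((Real.exp 1 ^ 2 / c) * ((p:ℝ) ^ (β * Real.log (1/c) - ((n:ℝ)-1)))⁻¹)
      = (8 * (Real.exp 1 ^ 2 / c)) * ((p:ℝ) ^ (β * Real.log (1/c) - ((n:ℝ)-1)))⁻¹ by ring]
    have hpp : (0:ℝ) < (p:ℝ) ^ (β * Real.log (1/c) - ((n:ℝ)-1)) := Real.rpow_pos_of_pos hP _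
    rw [← div_eq_mul_inv, div_le_one hpp]
    exact hkey
  have hqpn : (q:ℝ) ≤ (p:ℝ)^n := by
    refine hq.trans ?_
    have hn0 : (0:ℝ) < (n:ℝ) := by linarith
    have h1 : c * (p:ℝ) / (n:ℝ) ≤ (p:ℝ) := by
      rw [div_le_iff₀ hn0]
      nlinarith
    exact pow_le_pow_left₀ (by positivity) h1 n
  have hd1 : ∀ j, 1 ≤ d j := by
    intro j
    have hlog : 0 ≤ Real.log p := Real.log_nonneg hP1
    have h1 : (1:ℝ) ≤ (d j : ℝ) := le_trans (by nlinarith) (hd j)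
    exact_mod_cast h1
  -- the Hall-type event
  set Hall : (∀ j : Fin q, {T : Finset (Fin p) // T.card = d j}) → Prop := fun ω =>
    ∀ S : Finset (Fin q), (S.card : ℝ) ≤ c * p →
      S.card ≤ (S.biUnion (fun j => ((ω j : Finset (Fin p))))).card with hHdef
  have himp : ∀ ω, Hall ω → (∀ S : Finset (Fin q), (S.card : ℝ) ≤ c * p →
      LinearIndependent (MvPolynomial (Fin p × Fin q) ℝ)
        (fun j : S => fun i : Fin p =>
          if i ∈ ((ω (j : Fin q) : {T : Finset (Fin p) // T.card = d (j : Fin q)}) :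
              Finset (Fin p))
          then (MvPolynomial.X (i, (j : Fin q)) : MvPolynomial (Fin p × Fin q) ℝ) else 0)) := by
    intro ω hω S hS
    exact li_of_hall (fun j => ((ω j : Finset (Fin p)))) S (fun s hs => hω s
      (le_trans (by exact_mod_cast Finset.card_le_card hs) hS))
  set N : ℕ := Fintype.card (∀ j : Fin q, {T : Finset (Fin p) // T.card = d j}) with hNdef
  have hN0 : 0 < N := by
    rw [hNdef, card_omega]
    exact Finset.prod_pos (fun j _ => Nat.choose_pos (hdp j))
  set bad : Finset (∀ j : Fin q, {T : Finset (Fin p) // T.card = d j}) :=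
    Finset.univ.filter (fun ω => ¬ Hall ω) with hbaddef
  set I : Finset (Finset (Fin q) × Finset (Fin p)) :=
    Finset.univ.filter (fun SR => 2 ≤ SR.1.card ∧ (SR.1.card:ℝ) ≤ c * p ∧
      SR.2.card = SR.1.card - 1) with hIdef
  have hsubset : bad ⊆ I.biUnion (fun SR => Finset.univ.filter
      (fun ω : ∀ j : Fin q, {T : Finset (Fin p) // T.card = d j} =>
        ∀ j ∈ SR.1, ((ω j : Finset (Fin p)) ⊆ SR.2))) := by
    intro ω hω
    rw [hbaddef, Finset.mem_filter] at hω
    have hω2 : ∃ S : Finset (Fin q), (S.card:ℝ) ≤ c*p ∧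
        (S.biUnion fun j => ((ω j : Finset (Fin p)))).card < S.card := by
      by_contra hcon
      push_neg at hcon
      exact hω.2 (fun S hS => hcon S hS)
    obtain ⟨S, hS1, hS2⟩ := hω2
    have hone : ∀ j ∈ S, 1 ≤ ((ω j : Finset (Fin p))).card := fun j _ => by
      rw [(ω j).2]; exact hd1 j
    have hcard2 : 2 ≤ S.card := by
      have h0 : S.card ≠ 0 := by
        intro h
        rw [h] at hS2
        omega
      have h1 : S.card ≠ 1 := by
        intro h
        obtain ⟨j, hj⟩ := Finset.card_eq_one.mp h
        have hmem : j ∈ S := by rw [hj]; exact Finset.mem_singleton_self j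
        have hbig : 1 ≤ ((ω j : Finset (Fin p))).card := hone j hmem
        rw [hj, Finset.singleton_biUnion, Finset.card_singleton] at hS2
        omega
      omega
    have hSp : S.card ≤ p := by
      have h1 : (S.card:ℝ) ≤ (p:ℝ) := le_trans hS1 (by nlinarith)
      exact_mod_cast h1
    obtain ⟨R, hNR, -, hRcard⟩ := Finset.exists_subsuperset_card_eq
      (Finset.subset_univ (S.biUnion (fun j => ((ω j : Finset (Fin p))))))
      (show (S.biUnion (fun j => ((ω j : Finset (Fin p))))).card ≤ S.card - 1 by omega)
      (by rw [Finset.card_univ, Fintype.card_fin]; omega)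
    refine Finset.mem_biUnion.mpr ⟨(S, R), ?_, ?_⟩
    · rw [hIdef, Finset.mem_filter]
      exact ⟨Finset.mem_univ _, hcard2, hS1, hRcard⟩
    · rw [Finset.mem_filter]
      exact ⟨Finset.mem_univ _, fun j hj =>
        (Finset.subset_biUnion_of_mem (fun j => ((ω j : Finset (Fin p)))) hj).trans hNR⟩
  have hfrac : ∀ SR ∈ I, ((Finset.univ.filter
      (fun ω : ∀ j : Fin q, {T : Finset (Fin p) // T.card = d j} =>
        ∀ j ∈ SR.1, ((ω j : Finset (Fin p)) ⊆ SR.2))).card : ℝ)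
      ≤ (N:ℝ) * ((((SR.1.card:ℝ)-1)/(p:ℝ)) ^ ((1:ℝ) + β * Real.log p))^SR.1.card := by
    intro SR hSR
    rw [hIdef, Finset.mem_filter] at hSR
    obtain ⟨-, hs2, hscp, hR⟩ := hSR
    rw [card_event]
    have hm1 : 1 ≤ SR.2.card := by omega
    have hmp : SR.2.card ≤ p := by
      have h1 := Finset.card_le_univ SR.2
      rwa [Fintype.card_fin] at h1
    have hx0 : (0:ℝ) < (SR.2.card:ℝ)/(p:ℝ) := by
      have h1 : (0:ℝ) < (SR.2.card:ℝ) := by exact_mod_cast hm1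
      positivity
    have hx1 : (SR.2.card:ℝ)/(p:ℝ) ≤ 1 := by
      rw [div_le_one hP]; exact_mod_cast hmp
    have hfac : ∀ j : Fin q,
        ((if j ∈ SR.1 then SR.2.card.choose (d j) else p.choose (d j) : ℕ):ℝ)
        ≤ (p.choose (d j) : ℝ) * (if j ∈ SR.1 then
            ((SR.2.card:ℝ)/(p:ℝ)) ^ ((1:ℝ) + β * Real.log p) else 1) := by
      intro j
      by_cases hj : j ∈ SR.1
      · simp only [hj, if_true]
        have hch : (0:ℝ) < (p.choose (d j) : ℝ) := by
          exact_mod_cast Nat.choose_pos (hdp j)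
        rw [← div_le_iff₀' hch]
        calc (SR.2.card.choose (d j) : ℝ) / (p.choose (d j) : ℝ)
            ≤ ((SR.2.card:ℝ)/(p:ℝ)) ^ (d j) := choose_div_choose_le _ _ _ hmp (hdp j)
          _ = ((SR.2.card:ℝ)/(p:ℝ)) ^ ((d j : ℕ):ℝ) := (Real.rpow_natCast _ _).symm
          _ ≤ ((SR.2.card:ℝ)/(p:ℝ)) ^ ((1:ℝ) + β * Real.log p) :=
              Real.rpow_le_rpow_of_exponent_ge hx0 hx1 (hd j)
      · simp [hj]
    have hcastR : (SR.2.card : ℝ) = (SR.1.card:ℝ) - 1 := by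
      rw [hR, Nat.cast_sub (by omega : 1 ≤ SR.1.card)]
      norm_num
    calc ((∏ j, (if j ∈ SR.1 then SR.2.card.choose (d j) else p.choose (d j)) : ℕ) : ℝ)
        = ∏ j, ((if j ∈ SR.1 then SR.2.card.choose (d j) else p.choose (d j) : ℕ) : ℝ) := by
          push_cast; rfl
      _ ≤ ∏ j, ((p.choose (d j) : ℝ) * (if j ∈ SR.1 then
            ((SR.2.card:ℝ)/(p:ℝ)) ^ ((1:ℝ) + β * Real.log p) else 1)) :=
          Finset.prod_le_prod (fun j _ => Nat.cast_nonneg _) (fun j _ => hfac j)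
      _ = (∏ j, (p.choose (d j):ℝ)) * ∏ j, (if j ∈ SR.1 then
            ((SR.2.card:ℝ)/(p:ℝ)) ^ ((1:ℝ) + β * Real.log p) else 1) :=
          Finset.prod_mul_distrib
      _ = (N:ℝ) * (((SR.2.card:ℝ)/(p:ℝ)) ^ ((1:ℝ) + β * Real.log p))^SR.1.card := by
          congr 1
          · rw [hNdef, card_omega]; push_cast; rfl
          · rw [Finset.prod_ite_mem, Finset.univ_inter, Finset.prod_const]
      _ = (N:ℝ) * ((((SR.1.card:ℝ)-1)/(p:ℝ)) ^ ((1:ℝ) + β * Real.log p))^SR.1.card := by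
          rw [hcastR]
  have hsum : (∑ SR ∈ I,
      ((((SR.1.card:ℝ)-1)/(p:ℝ)) ^ ((1:ℝ) + β * Real.log p))^SR.1.card) ≤ 8 * B^2 := by
    have hmaps : ∀ SR ∈ I, SR.1.card ∈ Finset.Icc 2 q := by
      intro SR hSR
      rw [hIdef, Finset.mem_filter] at hSR
      refine Finset.mem_Icc.mpr ⟨hSR.2.1, ?_⟩
      have h1 := Finset.card_le_univ SR.1
      rwa [Fintype.card_fin] at h1
    rw [← Finset.sum_fiberwise_of_maps_to hmaps]
    have hinner : ∀ s ∈ Finset.Icc 2 q,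
        (∑ SR ∈ I.filter (fun SR => SR.1.card = s),
          ((((SR.1.card:ℝ)-1)/(p:ℝ)) ^ ((1:ℝ) + β * Real.log p))^SR.1.card) ≤ B ^ s := by
      intro s hs
      rcases Finset.eq_empty_or_nonempty (I.filter (fun SR => SR.1.card = s)) with he | hne
      · rw [he, Finset.sum_empty, hBdef]
        positivity
      · obtain ⟨SR0, hSR0⟩ := hne
        have hmem := hSR0
        rw [Finset.mem_filter, hIdef, Finset.mem_filter] at hmem
        obtain ⟨⟨-, h2, hcp, -⟩, hcard⟩ := hmem
        rw [hcard] at h2 hcp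
        have hconst : (∑ SR ∈ I.filter (fun SR => SR.1.card = s),
            ((((SR.1.card:ℝ)-1)/(p:ℝ)) ^ ((1:ℝ) + β * Real.log p))^SR.1.card)
            = ((I.filter (fun SR => SR.1.card = s)).card : ℝ) *
              ((((s:ℝ)-1)/(p:ℝ)) ^ ((1:ℝ) + β * Real.log p))^s := by
          rw [Finset.sum_congr rfl (fun SR hSR => by
            rw [(Finset.mem_filter.mp hSR).2]), Finset.sum_const, nsmul_eq_mul]
        rw [hconst]
        have hfibsub : I.filter (fun SR => SR.1.card = s) ⊆
            (Finset.univ.powersetCard s) ×ˢ (Finset.univ.powersetCard (s-1)) := by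
          intro SR hSR
          rw [Finset.mem_filter, hIdef, Finset.mem_filter] at hSR
          obtain ⟨⟨-, -, -, hR⟩, hcard'⟩ := hSR
          rw [Finset.mem_product, Finset.mem_powersetCard, Finset.mem_powersetCard]
          exact ⟨⟨Finset.subset_univ _, hcard'⟩, Finset.subset_univ _, by omega⟩
        have hfib : ((I.filter (fun SR => SR.1.card = s)).card : ℝ)
            ≤ (q.choose s : ℝ) * (p.choose (s-1) : ℝ) := by
          have h1 := Finset.card_le_card hfibsub
          rw [Finset.card_product, Finset.card_powersetCard, Finset.card_powersetCard,
            Finset.card_univ, Finset.card_univ, Fintype.card_fin, Fintype.card_fin] at h1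
          exact_mod_cast h1
        have hg0 : (0:ℝ) ≤ ((((s:ℝ)-1)/(p:ℝ)) ^ ((1:ℝ) + β * Real.log p))^s := by
          have hs2' : (2:ℝ) ≤ (s:ℝ) := by exact_mod_cast h2
          have hb0 : (0:ℝ) ≤ ((s:ℝ)-1)/(p:ℝ) := div_nonneg (by linarith) hP.le
          exact pow_nonneg (Real.rpow_nonneg hb0 _) s
        calc ((I.filter (fun SR => SR.1.card = s)).card : ℝ) *
              ((((s:ℝ)-1)/(p:ℝ)) ^ ((1:ℝ) + β * Real.log p))^s
            ≤ ((q.choose s : ℝ) * (p.choose (s-1) : ℝ)) *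
              ((((s:ℝ)-1)/(p:ℝ)) ^ ((1:ℝ) + β * Real.log p))^s :=
              mul_le_mul_of_nonneg_right hfib hg0
          _ ≤ B ^ s := by
              rw [hBdef]
              exact per_term c β n p q s hc0 hc1 hp1 hβ1 hqpn h2 hcp
    refine le_trans (Finset.sum_le_sum hinner) ?_
    have hB2 : B ≤ 1/2 := by linarith
    have hstep : ∀ s ∈ Finset.Icc 2 q, B ^ s ≤ B^2 * (4 * (1/2:ℝ)^s) := by
      intro s hs
      obtain ⟨h2, -⟩ := Finset.mem_Icc.mp hs
      obtain ⟨k, rfl⟩ : ∃ k, s = k + 2 := ⟨s-2, by omega⟩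
      rw [pow_add, pow_add]
      calc B^k * B^2 ≤ (1/2:ℝ)^k * B^2 :=
            mul_le_mul_of_nonneg_right (pow_le_pow_left₀ hB0 hB2 k) (by positivity)
        _ = B^2 * (4 * ((1/2:ℝ)^k * (1/2)^2)) := by ring
    refine le_trans (Finset.sum_le_sum hstep) ?_
    have hsubIcc : Finset.Icc 2 q ⊆ Finset.range (q+1) := by
      intro x hx
      rw [Finset.mem_range]
      have := (Finset.mem_Icc.mp hx).2
      omega
    refine le_trans (Finset.sum_le_sum_of_subset_of_nonneg hsubIcc
      (fun i _ _ => by positivity)) ?_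
    have hgeom : ∑ s ∈ Finset.range (q+1), (1/2:ℝ)^s ≤ 2 := by
      rw [geom_sum_eq (by norm_num : (1/2:ℝ) ≠ 1)]
      have h0 : (0:ℝ) ≤ (1/2:ℝ)^(q+1) := by positivity
      have h1 : (1/2:ℝ)^(q+1) ≤ 1 := pow_le_one₀ (by norm_num) (by norm_num)
      rw [div_le_iff_of_neg (by norm_num : (1/2:ℝ) - 1 < 0)]
      linarith
    calc ∑ s ∈ Finset.range (q+1), B^2 * (4 * (1/2:ℝ)^s)
        = 4 * B^2 * ∑ s ∈ Finset.range (q+1), (1/2:ℝ)^s := by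
          rw [Finset.mul_sum]
          exact Finset.sum_congr rfl (fun s _ => by ring)
      _ ≤ 4 * B^2 * 2 := by
          refine mul_le_mul_of_nonneg_left hgeom (by positivity)
      _ = 8 * B^2 := by ring
  -- put everything together
  have hbadsum : (bad.card : ℝ) ≤ (N:ℝ) * (8 * B^2) := by
    calc (bad.card : ℝ)
        ≤ ((I.biUnion (fun SR => Finset.univ.filter
            (fun ω : ∀ j : Fin q, {T : Finset (Fin p) // T.card = d j} =>
              ∀ j ∈ SR.1, ((ω j : Finset (Fin p)) ⊆ SR.2)))).card : ℝ) := by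
          exact_mod_cast Finset.card_le_card hsubset
      _ ≤ ∑ SR ∈ I, ((Finset.univ.filter
            (fun ω : ∀ j : Fin q, {T : Finset (Fin p) // T.card = d j} =>
              ∀ j ∈ SR.1, ((ω j : Finset (Fin p)) ⊆ SR.2))).card : ℝ) := by
          exact_mod_cast Finset.card_biUnion_le
      _ ≤ ∑ SR ∈ I, (N:ℝ) *
            ((((SR.1.card:ℝ)-1)/(p:ℝ)) ^ ((1:ℝ) + β * Real.log p))^SR.1.card :=
          Finset.sum_le_sum hfrac
      _ = (N:ℝ) * ∑ SR ∈ I,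
            ((((SR.1.card:ℝ)-1)/(p:ℝ)) ^ ((1:ℝ) + β * Real.log p))^SR.1.card := by
          rw [Finset.mul_sum]
      _ ≤ (N:ℝ) * (8 * B^2) := by
          refine mul_le_mul_of_nonneg_left hsum (by positivity)
  have hbadB : (bad.card : ℝ) ≤ (N:ℝ) * B := by
    refine hbadsum.trans ?_
    have hNnn : (0:ℝ) ≤ (N:ℝ) := Nat.cast_nonneg N
    calc (N:ℝ) * (8 * B^2) = ((N:ℝ)*B)*(8*B) := by ring
      _ ≤ ((N:ℝ)*B)*1 := mul_le_mul_of_nonneg_left h8B (mul_nonneg hNnn hB0)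
      _ = (N:ℝ)*B := by rw [mul_one]
  have hallcard : (Finset.univ.filter Hall).card + bad.card = N := by
    rw [hbaddef, hNdef, ← Finset.card_univ]
    exact Finset.card_filter_add_card_filter_not Hall
  have hgoodcard : (Finset.univ.filter Hall).card ≤ Nat.card
      {ω : ∀ j : Fin q, {T : Finset (Fin p) // T.card = d j} //
        ∀ S : Finset (Fin q), (S.card : ℝ) ≤ c * p →
          LinearIndependent (MvPolynomial (Fin p × Fin q) ℝ)
            (fun j : S => fun i : Fin p =>
              if i ∈ ((ω (j : Fin q) : {T : Finset (Fin p) // T.card = d (j : Fin q)}) :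
                  Finset (Fin p))
              then (MvPolynomial.X (i, (j : Fin q)) : MvPolynomial (Fin p × Fin q) ℝ)
              else 0)} := by
    rw [Nat.card_eq_fintype_card, Fintype.card_subtype]
    refine Finset.card_le_card ?_
    intro ω hω
    rw [Finset.mem_filter] at hω ⊢
    exact ⟨Finset.mem_univ _, himp ω hω.2⟩
  have hNR : (0:ℝ) < (N:ℝ) := by exact_mod_cast hN0
  rw [Nat.card_eq_fintype_card (α := ∀ j : Fin q, {T : Finset (Fin p) // T.card = d j}),
    ← hNdef]
  have hhall : ((Finset.univ.filter Hall).card : ℝ) = (N:ℝ) - (bad.card:ℝ) := by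
    have := hallcard
    have h2 : ((Finset.univ.filter Hall).card : ℝ) + (bad.card:ℝ) = (N:ℝ) := by
      exact_mod_cast congrArg (Nat.cast : ℕ → ℝ) this
    linarith
  have hstep1 : 1 - B ≤ ((Finset.univ.filter Hall).card : ℝ) / (N:ℝ) := by
    rw [hhall, sub_div, div_self (ne_of_gt hNR)]
    have hfr : (bad.card:ℝ) / (N:ℝ) ≤ B := by
      rw [div_le_iff₀ hNR]
      linarith
    linarith
  refine le_trans hstep1 ?_
  have hcast : ((Finset.univ.filter Hall).card : ℝ) ≤ (Nat.card
      {ω : ∀ j : Fin q, {T : Finset (Fin p) // T.card = d j} //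
        ∀ S : Finset (Fin q), (S.card : ℝ) ≤ c * p →
          LinearIndependent (MvPolynomial (Fin p × Fin q) ℝ)
            (fun j : S => fun i : Fin p =>
              if i ∈ ((ω (j : Fin q) : {T : Finset (Fin p) // T.card = d (j : Fin q)}) :
                  Finset (Fin p))
              then (MvPolynomial.X (i, (j : Fin q)) : MvPolynomial (Fin p × Fin q) ℝ)
              else 0)} : ℝ) := by
    exact_mod_cast hgoodcard
  exact div_le_div_of_nonneg_right hcast hNR.le
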